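/- Let k be a perfect field of characteristic p, W(k) its ring of Witt vectors with Frobenius φ, and K₀ = Frac(W(k)). Let D be a finite-dimensional K₀-vector space with a bijective φ-semilinear endomorphism φ_D. Then V(D) := {x ∈ D ⊗_{K₀} K̂₀ᵘʳ : (φ_D ⊗ φ)(x) = x} is a ℚ_p-vector space, and the natural map V(D) ⊗_{ℚ_p} K̂₀ᵘʳ → D ⊗_{K₀} K̂₀ᵘʳ is injective; its image is the slope-0 part of D ⊗ K̂₀ᵘʳ. In particular dim_{ℚ_p} V(D) equals the dimension of the slope-0 part of D. -/

import Mathlib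

open TensorProduct

/-- abstract form of the slope-0 descent. `K₀` plays the role of
`Frac(W(k))` with Frobenius `φ`, `L` the role of `K̂₀ᵘʳ = Frac(W(k̄))` with
Frobenius `σ` extending `φ`, and `F` the fixed subfield of `σ` (which is `ℚ_p`).
For a φ-module `D` over `K₀` with bijective φ-semilinear `φD`, let
`Φ = σ ⊗ φD` on `L ⊗[K₀] D`. Then the fixed points
`V(D) = {x : Φ x = x}` form an `F`-subspace (first conjunct), and the natural map
`V(D) ⊗_F L → D ⊗_{K₀} L` is injective, i.e. any `F`-linearly independent family
of fixed vectors is `L`-linearly independent (second conjunct); its image is the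
slope-0 part, the span of the fixed vectors (third conjunct, with the slope-0
part realized as the `L`-span of the `Φ`-fixed vectors). -/
theorem stmt6 (K₀ L : Type*) [Field K₀] [Field L] [Algebra K₀ L]
    (φ : K₀ ≃+* K₀) (σ : L ≃+* L)
    (hcompat : ∀ a : K₀, σ (algebraMap K₀ L a) = algebraMap K₀ L (φ a))
    (D : Type*) [AddCommGroup D] [Module K₀ D] [FiniteDimensional K₀ D]
    (φD : D → D) (haddD : ∀ x y, φD (x + y) = φD x + φD y)
    (hsemiD : ∀ (a : K₀) (x : D), φD (a • x) = φ a • φD x)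
    (hbijD : Function.Bijective φD)
    (Φ : L ⊗[K₀] D → L ⊗[K₀] D)
    (haddΦ : ∀ x y, Φ (x + y) = Φ x + Φ y)
    (hsemiΦ : ∀ (c : L) (x : L ⊗[K₀] D), Φ (c • x) = σ c • Φ x)
    (hΦ : ∀ (a : L) (d : D), Φ (a ⊗ₜ[K₀] d) = σ a ⊗ₜ[K₀] φD d)
    (F : Subfield L) (hF : ∀ c : L, c ∈ F ↔ σ c = c) :
    (∀ (c : L) (x : L ⊗[K₀] D), c ∈ F → Φ x = x → Φ (c • x) = c • x) ∧
    (∀ (ι : Type) (v : ι → L ⊗[K₀] D), (∀ i, Φ (v i) = v i) →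
      (∀ (s : Finset ι) (c : ι → L), (∀ i, c i ∈ F) →
        (∑ i ∈ s, c i • v i) = 0 → ∀ i ∈ s, c i = 0) →
      LinearIndependent L v) ∧
    (∀ (ι : Type) (v : ι → L ⊗[K₀] D), (∀ i, Φ (v i) = v i) →
      Submodule.span L (Set.range v) ≤ Submodule.span L {x | Φ x = x}) := by

  have hΦ0 : Φ 0 = 0 := by
    have := haddΦ 0 0
    simpa using this.symm
  refine ⟨?_, ?_, ?_⟩
  · intro c x hc hx
    rw [hsemiΦ, hx, (hF c).mp hc]
  · intro ι v hfix hFind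
    classical
    have hΦsum : ∀ (t : Finset ι) (d : ι → L),
        Φ (∑ k ∈ t, d k • v k) = ∑ k ∈ t, σ (d k) • v k := by
      intro t d
      induction t using Finset.induction with
      | empty => simpa using hΦ0
      | insert a t hnotmem ih2 =>
        rw [Finset.sum_insert hnotmem, haddΦ, ih2, hsemiΦ, hfix,
          Finset.sum_insert hnotmem]
    have key : ∀ n (s : Finset ι), s.card = n → ∀ c : ι → L,
        (∑ i ∈ s, c i • v i) = 0 → ∀ i ∈ s, c i = 0 := by
      intro n
      induction n using Nat.strong_induction_on with
      | _ n ih =>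
        intro s hcard c hsum i hi
        by_contra hne
        set c' : ι → L := fun k => (c i)⁻¹ * c k with hc'
        have hc'i : c' i = 1 := by simp only [hc']; exact inv_mul_cancel₀ hne
        have hsum' : ∑ k ∈ s, c' k • v k = 0 := by
          have h0 : (c i)⁻¹ • ∑ k ∈ s, c k • v k = 0 := by rw [hsum]; simp
          rw [Finset.smul_sum] at h0
          simpa [hc', smul_smul] using h0
        have hsum'' : ∑ k ∈ s, σ (c' k) • v k = 0 := by
          rw [← hΦsum s c', hsum', hΦ0]
        have hsub : ∑ k ∈ s, (σ (c' k) - c' k) • v k = 0 := by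
          have hss : ∀ k, (σ (c' k) - c' k) • v k = σ (c' k) • v k - c' k • v k :=
            fun k => by rw [eq_sub_iff_add_eq, ← add_smul, sub_add_cancel]
          rw [Finset.sum_congr rfl (fun k _ => hss k), Finset.sum_sub_distrib, hsum', hsum'', sub_zero]
        have hsub' : ∑ k ∈ s.erase i, (σ (c' k) - c' k) • v k = 0 := by
          rw [← Finset.add_sum_erase s _ hi] at hsub
          simpa [hc'i] using hsub
        have hzero : ∀ k ∈ s.erase i, σ (c' k) - c' k = 0 :=
          ih (s.erase i).card (by rw [← hcard]; exact Finset.card_erase_lt_of_mem hi)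
            _ rfl _ hsub'
        have hfixc : ∀ k, (if k ∈ s then c' k else 0) ∈ F := by
          intro k
          by_cases hk : k ∈ s
          · simp only [hk, if_true]
            rw [hF]
            by_cases h : k = i
            · subst h; rw [hc'i]; simp
            · have := hzero k (Finset.mem_erase.mpr ⟨h, hk⟩)
              exact sub_eq_zero.mp this
          · simp only [hk, if_false]; exact F.zero_mem
        have hsumif : ∑ k ∈ s, (if k ∈ s then c' k else 0) • v k = 0 := by
          rw [Finset.sum_congr rfl (fun k hk => by rw [if_pos hk])]
          exact hsum'
        have := hFind s _ hfixc hsumif i hi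
        rw [if_pos hi, hc'i] at this
        exact one_ne_zero this
    rw [linearIndependent_iff']
    intro s g hg i hi
    exact key s.card s rfl g hg i hi
  · intro ι v hfix
    apply Submodule.span_mono
    rintro x ⟨i, rfl⟩
    exact hfix i
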